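/- Let R > 0 and 0 < δ < 1 be real numbers, and let a : ℝ → ℝ satisfy a'(t) = R · a(t) · (a(t) - δ) · (1 - a(t)) for all t ≥ 0 (in the sense of HasDerivAt), with δ < a(0) < 1. Then for every t ≥ 0 the explicit solution formula holds: (a(t)/a(0))^(1/δ) · ((a(t) - δ)/(a(0) - δ))^(-1/(δ·(1-δ))) · ((1 - a(t))/(1 - a(0)))^(1/(1-δ)) = exp(-R·t), where powers are real powers of positive bases. -/

import Mathlib

open Real Set Filter Topology

lemma dgate_H_deriv (R δ : ℝ) (hδ0 : 0 < δ) (hδ1 : δ < 1) (a : ℝ → ℝ) (s : ℝ)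
    (hd : HasDerivAt a (R * a s * (a s - δ) * (1 - a s)) s)
    (h1 : δ < a s) (h2 : a s < 1) :
    HasDerivAt (fun u => -(1/δ) * Real.log (a u) + (1/(δ*(1-δ))) * Real.log (a u - δ)
      - (1/(1-δ)) * Real.log (1 - a u) - R * u) 0 s := by
  have ha0 : a s ≠ 0 := by nlinarith
  have haδ : a s - δ ≠ 0 := by nlinarith
  have ha1 : (1:ℝ) - a s ≠ 0 := by nlinarith
  have hδ : δ ≠ 0 := ne_of_gt hδ0
  have hδ' : (1:ℝ) - δ ≠ 0 := by nlinarith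
  set f' : ℝ := R * a s * (a s - δ) * (1 - a s) with hf'
  have l1 : HasDerivAt (fun u => Real.log (a u)) (f' / a s) s := hd.log ha0
  have l2 : HasDerivAt (fun u => Real.log (a u - δ)) (f' / (a s - δ)) s :=
    (hd.sub_const δ).log haδ
  have l3 : HasDerivAt (fun u => Real.log (1 - a u)) ((-f') / (1 - a s)) s :=
    (hd.const_sub 1).log ha1
  have l4 : HasDerivAt (fun u : ℝ => R * u) R s := by
    simpa using (hasDerivAt_id s).const_mul R
  have key := (((l1.const_mul (-(1/δ))).add (l2.const_mul (1/(δ*(1-δ))))).sub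
      (l3.const_mul (1/(1-δ)))).sub l4
  refine HasDerivAt.congr_deriv key ?_
  rw [hf']
  field_simp
  ring

lemma dgate_H_const (R δ : ℝ) (hδ0 : 0 < δ) (hδ1 : δ < 1) (a : ℝ → ℝ)
    (ha : ∀ t : ℝ, 0 ≤ t → HasDerivAt a (R * a t * (a t - δ) * (1 - a t)) t)
    (t : ℝ) (ht : 0 ≤ t)
    (hin : ∀ s, 0 ≤ s → s ≤ t → δ < a s ∧ a s < 1) :
    -(1/δ) * Real.log (a t) + (1/(δ*(1-δ))) * Real.log (a t - δ)
      - (1/(1-δ)) * Real.log (1 - a t) - R * t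
    = -(1/δ) * Real.log (a 0) + (1/(δ*(1-δ))) * Real.log (a 0 - δ)
      - (1/(1-δ)) * Real.log (1 - a 0) - R * 0 := by
  set H : ℝ → ℝ := fun u => -(1/δ) * Real.log (a u) + (1/(δ*(1-δ))) * Real.log (a u - δ)
      - (1/(1-δ)) * Real.log (1 - a u) - R * u with hH
  have hcont : ContinuousOn H (Icc 0 t) := by
    intro s hs
    exact ((dgate_H_deriv R δ hδ0 hδ1 a s (ha s hs.1) (hin s hs.1 hs.2).1
      (hin s hs.1 hs.2).2).continuousAt).continuousWithinAt
  have := constant_of_has_deriv_right_zero hcont (fun s hs =>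
    (dgate_H_deriv R δ hδ0 hδ1 a s (ha s hs.1) (hin s hs.1 hs.2.le).1
      (hin s hs.1 hs.2.le).2).hasDerivWithinAt) t ⟨ht, le_refl t⟩
  exact this

lemma dgate_formula_aux (R δ : ℝ) (hδ0 : 0 < δ) (hδ1 : δ < 1) (a : ℝ → ℝ)
    (ha : ∀ t : ℝ, 0 ≤ t → HasDerivAt a (R * a t * (a t - δ) * (1 - a t)) t)
    (t : ℝ) (ht : 0 ≤ t)
    (hin : ∀ s, 0 ≤ s → s ≤ t → δ < a s ∧ a s < 1) :
    (a t / a 0) ^ (1 / δ) *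
        ((a t - δ) / (a 0 - δ)) ^ (-(1 / (δ * (1 - δ)))) *
        ((1 - a t) / (1 - a 0)) ^ (1 / (1 - δ)) = Real.exp (-(R * t)) := by
  obtain ⟨h1t, h2t⟩ := hin t ht le_rfl
  obtain ⟨h10, h20⟩ := hin 0 le_rfl ht
  have pat : 0 < a t := lt_trans hδ0 h1t
  have pa0 : 0 < a 0 := lt_trans hδ0 h10
  have pδt : 0 < a t - δ := by linarith
  have pδ0 : 0 < a 0 - δ := by linarith
  have p1t : 0 < 1 - a t := by linarith
  have p10 : 0 < 1 - a 0 := by linarith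
  have Heq := dgate_H_const R δ hδ0 hδ1 a ha t ht hin
  rw [Real.rpow_def_of_pos (div_pos pat pa0), Real.rpow_def_of_pos (div_pos pδt pδ0),
    Real.rpow_def_of_pos (div_pos p1t p10), ← Real.exp_add, ← Real.exp_add,
    Real.log_div pat.ne' pa0.ne', Real.log_div pδt.ne' pδ0.ne',
    Real.log_div p1t.ne' p10.ne']
  congr 1
  linear_combination -Heq

lemma dgate_invariant (R δ : ℝ) (hR : 0 < R) (hδ0 : 0 < δ) (hδ1 : δ < 1) (a : ℝ → ℝ)
    (ha : ∀ t : ℝ, 0 ≤ t → HasDerivAt a (R * a t * (a t - δ) * (1 - a t)) t)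
    (h0 : δ < a 0) (h0' : a 0 < 1) :
    ∀ t : ℝ, 0 ≤ t → δ < a t ∧ a t < 1 := by
  by_contra hcon
  push_neg at hcon
  obtain ⟨t₀, ht₀, hbad⟩ := hcon
  set S : Set ℝ := Ici 0 ∩ a ⁻¹' (Iic δ ∪ Ici 1) with hS
  have ht₀S : t₀ ∈ S := by
    refine ⟨ht₀, ?_⟩
    rcases le_or_gt (a t₀) δ with h | h
    · exact Or.inl h
    · exact Or.inr (hbad h)
  have hScl : IsClosed S := by
    refine ContinuousOn.preimage_isClosed_of_isClosed ?_ isClosed_Ici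
      (isClosed_Iic.union isClosed_Ici)
    exact fun s hs => ((ha s hs).continuousAt).continuousWithinAt
  have hbdd : BddBelow S := ⟨0, fun x hx => hx.1⟩
  set T : ℝ := sInf S with hT
  have hTS : T ∈ S := hScl.csInf_mem ⟨t₀, ht₀S⟩ hbdd
  have hT0 : 0 ≤ T := hTS.1
  have hTpos : 0 < T := by
    rcases hT0.lt_or_eq with h | h
    · exact h
    · exfalso
      rcases hTS.2 with h' | h' <;> rw [← h] at h' <;> simp at h' <;> linarith
  have hbefore : ∀ s, 0 ≤ s → s < T → δ < a s ∧ a s < 1 := by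
    intro s hs hsT
    have hns : s ∉ S := notMem_of_lt_csInf hsT hbdd
    simp only [hS, mem_inter_iff, mem_preimage, mem_union, mem_Iic, mem_Ici, not_and_or,
      not_or, not_le] at hns
    rcases hns with h | h
    · exact absurd hs (by simpa using h)
    · exact h
  -- H is constant on [0, T)
  have hGform : ∀ t ∈ Ioo (0:ℝ) T,
      -(1/δ) * Real.log (a t) + (1/(δ*(1-δ))) * Real.log (a t - δ)
        - (1/(1-δ)) * Real.log (1 - a t)
      = (-(1/δ) * Real.log (a 0) + (1/(δ*(1-δ))) * Real.log (a 0 - δ)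
        - (1/(1-δ)) * Real.log (1 - a 0)) + R * t := by
    intro t htm
    have := dgate_H_const R δ hδ0 hδ1 a ha t htm.1.le
      (fun s hs hst => hbefore s hs (lt_of_le_of_lt hst htm.2))
    linarith
  set G : ℝ → ℝ := fun u => -(1/δ) * Real.log (a u) + (1/(δ*(1-δ))) * Real.log (a u - δ)
      - (1/(1-δ)) * Real.log (1 - a u) with hG
  set c : ℝ := -(1/δ) * Real.log (a 0) + (1/(δ*(1-δ))) * Real.log (a 0 - δ)
      - (1/(1-δ)) * Real.log (1 - a 0) with hc
  set l : Filter ℝ := 𝓝[<] T with hl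
  have hIoo : Ioo (0:ℝ) T ∈ l := Ioo_mem_nhdsLT_of_mem ⟨hTpos, le_refl T⟩
  have hGtend : Tendsto G l (𝓝 (c + R * T)) := by
    have h1 : Tendsto (fun t : ℝ => c + R * t) l (𝓝 (c + R * T)) := by
      apply Tendsto.mono_left _ nhdsWithin_le_nhds
      exact (continuous_const.add (continuous_const.mul continuous_id)).tendsto T
    refine Tendsto.congr' ?_ h1
    filter_upwards [hIoo] with t htm
    exact (hGform t htm).symm
  have hatend : Tendsto a l (𝓝 (a T)) :=
    ((ha T hT0).continuousAt.tendsto).mono_left nhdsWithin_le_nhds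
  have hev1 : ∀ᶠ t in l, δ < a t ∧ a t < 1 := by
    filter_upwards [hIoo] with t htm
    exact hbefore t htm.1.le htm.2
  have haTge : δ ≤ a T := ge_of_tendsto hatend (by filter_upwards [hev1] with t h using h.1.le)
  have haTle : a T ≤ 1 := le_of_tendsto hatend (by filter_upwards [hev1] with t h using h.2.le)
  have hδδ : 0 < δ * (1 - δ) := by nlinarith
  rcases hTS.2 with hcase | hcase
  · -- a T = δ : G tends to atBot, contradiction
    have haTeq : a T = δ := le_antisymm hcase haTge
    have h₁ : Tendsto (fun t => a t - δ) l (𝓝 0) := by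
      have := hatend.sub_const δ
      rwa [haTeq, sub_self] at this
    have h₂ : Tendsto (fun t => a t - δ) l (𝓝[>] 0) :=
      tendsto_nhdsWithin_of_tendsto_nhds_of_eventually_within _ h₁
        (by filter_upwards [hev1] with t h; simpa [sub_pos] using h.1)
    have hlog2 : Tendsto (fun t => Real.log (a t - δ)) l atBot :=
      Real.tendsto_log_nhdsGT_zero.comp h₂
    have hB : Tendsto (fun t => (1/(δ*(1-δ))) * Real.log (a t - δ)) l atBot :=
      hlog2.const_mul_atBot (by positivity)
    have hlog1 : Tendsto (fun t => Real.log (a t)) l (𝓝 (Real.log δ)) := by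
      have : Tendsto (fun t => Real.log (a t)) l (𝓝 (Real.log (a T))) :=
        (Real.continuousAt_log (by rw [haTeq]; exact ne_of_gt hδ0)).tendsto.comp hatend
      rwa [haTeq] at this
    have hlog3 : Tendsto (fun t => Real.log (1 - a t)) l (𝓝 (Real.log (1 - δ))) := by
      have : Tendsto (fun t => Real.log (1 - a t)) l (𝓝 (Real.log (1 - a T))) :=
        (Real.continuousAt_log (by rw [haTeq]; intro h; nlinarith [sub_eq_zero.mp h])).tendsto.comp
          ((tendsto_const_nhds.sub hatend))
      rwa [haTeq] at this
    have hfin : Tendsto (fun t => -(1/δ) * Real.log (a t) - (1/(1-δ)) * Real.log (1 - a t)) l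
        (𝓝 (-(1/δ) * Real.log δ - (1/(1-δ)) * Real.log (1 - δ))) :=
      (hlog1.const_mul _).sub (hlog3.const_mul _)
    have hGbot : Tendsto G l atBot := by
      have := hfin.add_atBot hB
      refine this.congr fun t => by simp only [hG]; ring
    exact not_tendsto_nhds_of_tendsto_atBot hGbot _ hGtend
  · -- a T = 1 : G tends to atTop, contradiction
    have haTeq : a T = 1 := le_antisymm haTle hcase
    have h₁ : Tendsto (fun t => 1 - a t) l (𝓝 0) := by
      have := (tendsto_const_nhds (x := (1:ℝ))).sub hatend
      rwa [haTeq, sub_self] at this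
    have h₂ : Tendsto (fun t => 1 - a t) l (𝓝[>] 0) :=
      tendsto_nhdsWithin_of_tendsto_nhds_of_eventually_within _ h₁
        (by filter_upwards [hev1] with t h; simpa [sub_pos] using h.2)
    have hlog3 : Tendsto (fun t => Real.log (1 - a t)) l atBot :=
      Real.tendsto_log_nhdsGT_zero.comp h₂
    have hC : Tendsto (fun t => -(1/(1-δ)) * Real.log (1 - a t)) l atTop :=
      hlog3.const_mul_atBot_of_neg (by rw [neg_lt_zero]; exact div_pos one_pos (by linarith))
    have hlog1 : Tendsto (fun t => Real.log (a t)) l (𝓝 (Real.log 1)) := by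
      have : Tendsto (fun t => Real.log (a t)) l (𝓝 (Real.log (a T))) :=
        (Real.continuousAt_log (by rw [haTeq]; norm_num)).tendsto.comp hatend
      rwa [haTeq] at this
    have hlog2 : Tendsto (fun t => Real.log (a t - δ)) l (𝓝 (Real.log (1 - δ))) := by
      have : Tendsto (fun t => Real.log (a t - δ)) l (𝓝 (Real.log (a T - δ))) :=
        (Real.continuousAt_log (by rw [haTeq]; intro h; nlinarith [sub_eq_zero.mp h])).tendsto.comp
          (hatend.sub_const δ)
      rwa [haTeq] at this
    have hfin : Tendsto (fun t => -(1/δ) * Real.log (a t) + (1/(δ*(1-δ))) * Real.log (a t - δ)) l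
        (𝓝 (-(1/δ) * Real.log 1 + (1/(δ*(1-δ))) * Real.log (1 - δ))) :=
      (hlog1.const_mul _).add (hlog2.const_mul _)
    have hGtop : Tendsto G l atTop := by
      have := hfin.add_atTop hC
      refine this.congr fun t => by simp only [hG]; ring
    exact not_tendsto_nhds_of_tendsto_atTop hGtop _ hGtend

theorem Dgate_explicit_solution_above
    (R δ : ℝ) (hR : 0 < R) (hδ0 : 0 < δ) (hδ1 : δ < 1)
    (a : ℝ → ℝ)
    (ha : ∀ t : ℝ, 0 ≤ t → HasDerivAt a (R * a t * (a t - δ) * (1 - a t)) t)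
    (h0 : δ < a 0) (h0' : a 0 < 1) :
    ∀ t : ℝ, 0 ≤ t →
      (a t / a 0) ^ (1 / δ) *
        ((a t - δ) / (a 0 - δ)) ^ (-(1 / (δ * (1 - δ)))) *
        ((1 - a t) / (1 - a 0)) ^ (1 / (1 - δ)) = Real.exp (-(R * t)) := by
  intro t ht
  exact dgate_formula_aux R δ hδ0 hδ1 a ha t ht
    (fun s hs _ => dgate_invariant R δ hR hδ0 hδ1 a ha h0 h0' s hs)
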